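/- Let z, w_i, w_j ∈ ℝ^d with w_i ≠ w_j, and let q ∈ [1,∞] with dual exponent q*. Then the infimum of ‖x − z‖_q over all x ∈ ℝ^d satisfying ‖x − w_i‖₂ ≥ ‖x − w_j‖₂ equals max{0, (‖z − w_j‖₂² − ‖z − w_i‖₂²) / (2‖w_j − w_i‖_{q*})}, and this infimum is attained. -/

import Mathlib

open scoped ENNReal


noncomputable def lpnorm (p : ENNReal) [Fact (1 ≤ p)] {n : ℕ} (x : Fin n → ℝ) : ℝ :=
  ‖(WithLp.equiv p (Fin n → ℝ)).symm x‖

variable {n : ℕ}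

lemma lpnorm_nonneg (p : ENNReal) [Fact (1 ≤ p)] (x : Fin n → ℝ) : 0 ≤ lpnorm p x :=
  norm_nonneg _

lemma lpnorm_zero (p : ENNReal) [Fact (1 ≤ p)] : lpnorm p (0 : Fin n → ℝ) = 0 := by
  simp [lpnorm]

lemma lpnorm_pos (p : ENNReal) [Fact (1 ≤ p)] {x : Fin n → ℝ} (hx : x ≠ 0) :
    0 < lpnorm p x := by
  rw [lpnorm, norm_pos_iff]
  intro h
  exact hx ((WithLp.equiv p (Fin n → ℝ)).symm.injective (by simpa using h))

lemma lpnorm_smul (p : ENNReal) [Fact (1 ≤ p)] (t : ℝ) (u : Fin n → ℝ) :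
    lpnorm p (t • u) = |t| * lpnorm p u := by
  rw [lpnorm, WithLp.equiv_symm_apply, WithLp.toLp_smul, norm_smul, Real.norm_eq_abs, lpnorm, WithLp.equiv_symm_apply]

lemma lpnorm_eq_sum {p : ENNReal} [Fact (1 ≤ p)] (hp : p ≠ ∞) (x : Fin n → ℝ) :
    lpnorm p x = (∑ i, |x i| ^ p.toReal) ^ (1 / p.toReal) := by
  have h1 : (1 : ENNReal) ≤ p := Fact.out
  have hp0 : 0 < p.toReal := ENNReal.toReal_pos (by rintro rfl; simp at h1) hp
  rw [lpnorm, PiLp.norm_eq_sum hp0]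
  simp [Real.norm_eq_abs]

lemma lpnorm_top (x : Fin n → ℝ) : lpnorm ∞ x = ⨆ i, |x i| := by
  rw [lpnorm, PiLp.norm_eq_ciSup]
  simp [Real.norm_eq_abs]

lemma lpnorm_two_sq (x : Fin n → ℝ) : lpnorm 2 x ^ 2 = ∑ i, x i ^ 2 := by
  rw [lpnorm_eq_sum (by norm_num) x]
  have h2 : ((2 : ENNReal)).toReal = (2 : ℝ) := by norm_num
  rw [h2]
  rw [← Real.rpow_natCast _ 2, ← Real.rpow_mul (by positivity)]
  norm_num


lemma conj_cases {q qs : ENNReal} (hq : 1 ≤ q) (hconj : 1 / q + 1 / qs = 1) :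
    (q = 1 ∧ qs = ∞) ∨ (q = ∞ ∧ qs = 1) ∨
      (q ≠ ∞ ∧ qs ≠ ∞ ∧ Real.HolderConjugate q.toReal qs.toReal) := by
  simp only [one_div] at hconj
  have hq0 : q ≠ 0 := by rintro rfl; simp at hq
  rcases eq_or_lt_of_le hq with h1 | h1
  · left
    refine ⟨h1.symm, ?_⟩
    rw [← h1, inv_one] at hconj
    have h0 : qs⁻¹ = 0 := by
      have := ENNReal.add_sub_cancel_left (a := (1:ENNReal)) (b := qs⁻¹) (by simp)
      rw [hconj] at this
      simp at this
      exact this.symm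
    simpa using h0
  rcases eq_or_ne q ∞ with rfl | hqt
  · right; left
    simp only [ENNReal.inv_top, zero_add] at hconj
    exact ⟨rfl, by simpa using congrArg (·⁻¹) hconj⟩
  · right; right
    have hqs0 : qs ≠ 0 := by
      rintro rfl
      rw [ENNReal.inv_zero] at hconj
      simp at hconj
    have hqs1 : qs⁻¹ = 1 - q⁻¹ := by
      rw [← hconj, add_comm, ENNReal.add_sub_cancel_right (by simp [hq0])]
    have hqinv_lt : q⁻¹ < 1 := by
      rw [ENNReal.inv_lt_one]; exact h1
    have hqst : qs ≠ ∞ := by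
      intro h
      rw [h, ENNReal.inv_top] at hqs1
      exact (tsub_pos_of_lt hqinv_lt).ne' hqs1.symm
    refine ⟨hqt, hqst, Real.holderConjugate_iff.mpr ⟨?_, ?_⟩⟩
    · have := (ENNReal.toReal_lt_toReal (by simp) hqt).mpr h1
      simpa using this
    · have h := congrArg ENNReal.toReal hconj
      rw [ENNReal.toReal_add (by simp [hq0]) (by simp [hqs0]), ENNReal.toReal_inv,
        ENNReal.toReal_inv, ENNReal.toReal_one] at h
      exact h

lemma lpnorm_one_eq (u : Fin n → ℝ) : lpnorm 1 u = ∑ i, |u i| := by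
  rw [lpnorm_eq_sum (by norm_num)]; simp

lemma lpnorm_holder (q qs : ENNReal) [Fact (1 ≤ q)] [Fact (1 ≤ qs)]
    (hconj : 1 / q + 1 / qs = 1) (u a : Fin n → ℝ) :
    ∑ k, u k * a k ≤ lpnorm q u * lpnorm qs a := by
  have key : ∀ (v b : Fin n → ℝ), ∑ k, v k * b k ≤ lpnorm 1 v * lpnorm ∞ b := by
    intro v b
    rcases isEmpty_or_nonempty (Fin n) with hE | hNE
    · simp [lpnorm_one_eq]
    · rw [lpnorm_one_eq, lpnorm_top]
      calc ∑ k, v k * b k ≤ ∑ k, |v k| * |b k| := by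
            refine Finset.sum_le_sum fun k _ => ?_
            rw [← abs_mul]; exact le_abs_self _
        _ ≤ ∑ k, |v k| * (⨆ i, |b i|) := by
            refine Finset.sum_le_sum fun k _ => ?_
            exact mul_le_mul_of_nonneg_left
              (le_ciSup (f := fun i => |b i|) (Set.Finite.bddAbove (Set.finite_range _)) k) (abs_nonneg _)
        _ = (∑ i, |v i|) * ⨆ i, |b i| := by rw [← Finset.sum_mul]
  rcases conj_cases (Fact.out : 1 ≤ q) hconj with ⟨hq, hqs⟩ | ⟨hq, hqs⟩ | ⟨hq, hqs, hc⟩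
  · subst hq; subst hqs; exact key u a
  · subst hq; subst hqs
    calc ∑ k, u k * a k = ∑ k, a k * u k := by simp [mul_comm]
      _ ≤ lpnorm 1 a * lpnorm ∞ u := key a u
      _ = lpnorm ∞ u * lpnorm 1 a := mul_comm _ _
  · rw [lpnorm_eq_sum hq, lpnorm_eq_sum hqs]
    exact Real.inner_le_Lp_mul_Lq Finset.univ u a hc

lemma exists_dual_vec (q qs : ENNReal) [Fact (1 ≤ q)] [Fact (1 ≤ qs)]
    (hconj : 1 / q + 1 / qs = 1) (a : Fin n → ℝ) (ha : a ≠ 0) :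
    ∃ u : Fin n → ℝ, lpnorm q u ≤ 1 ∧ lpnorm qs a ≤ ∑ k, u k * a k := by
  obtain ⟨i0, hi0⟩ : ∃ i, a i ≠ 0 := by
    by_contra h; push_neg at h; exact ha (funext h)
  haveI : Nonempty (Fin n) := ⟨i0⟩
  rcases conj_cases (Fact.out : 1 ≤ q) hconj with ⟨hq, hqs⟩ | ⟨hq, hqs⟩ | ⟨hq, hqs, hc⟩
  · -- q = 1, qs = ∞
    subst hq; subst hqs
    obtain ⟨k0, hk0⟩ := Finite.exists_max (fun i => |a i|)
    have hak0 : a k0 ≠ 0 := by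
      intro h
      have := hk0 i0
      rw [h, abs_zero] at this
      exact hi0 (abs_eq_zero.mp (le_antisymm this (abs_nonneg _)))
    refine ⟨fun i => if i = k0 then |a k0| / a k0 else 0, ?_, ?_⟩
    · rw [lpnorm_one_eq]
      rw [Finset.sum_eq_single_of_mem k0 (Finset.mem_univ _)
        (fun b _ hb => by simp [hb])]
      simp [abs_div, abs_abs, div_self (abs_ne_zero.mpr hak0)]
    · rw [lpnorm_top]
      rw [Finset.sum_eq_single_of_mem k0 (Finset.mem_univ _)
        (fun b _ hb => by simp [hb])]
      simp only [if_true, div_mul_cancel₀ _ hak0]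
      exact ciSup_le hk0
  · -- q = ∞, qs = 1
    subst hq; subst hqs
    refine ⟨fun k => if a k = 0 then 0 else |a k| / a k, ?_, ?_⟩
    · rw [lpnorm_top]
      refine ciSup_le fun k => ?_
      by_cases h : a k = 0
      · simp [h]
      · simp [h, abs_div, abs_abs, div_self (abs_ne_zero.mpr h)]
    · rw [lpnorm_one_eq]
      refine le_of_eq (Finset.sum_congr rfl fun k _ => ?_)
      by_cases h : a k = 0
      · simp [h]
      · simp [h, div_mul_cancel₀ _ h]
  · -- 1 < q, qs < ∞
    set p := q.toReal with hp
    set s := qs.toReal with hs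
    have hs1 : 1 < s := hc.symm.lt
    have hs0 : 0 < s := by linarith
    have hp0 : 0 < p := hc.pos
    have hN : 0 < lpnorm qs a := lpnorm_pos qs ha
    set N := lpnorm qs a with hNdef
    have hNs : N ^ s = ∑ k, |a k| ^ s := by
      rw [hNdef, lpnorm_eq_sum hqs, ← hs, ← Real.rpow_mul
        (Finset.sum_nonneg fun k _ => Real.rpow_nonneg (abs_nonneg _) _),
        one_div, inv_mul_cancel₀ hs0.ne', Real.rpow_one]
    have hsp : (s - 1) * p = s := by
      have := hc.mul_eq_add
      nlinarith [hc.lt]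
    refine ⟨fun k => (if a k < 0 then (-1:ℝ) else 1) * |a k| ^ (s - 1) / N ^ (s - 1),
      ?_, ?_⟩
    · rw [lpnorm_eq_sum hq, ← hp]
      have habs : ∀ k, |(if a k < 0 then (-1:ℝ) else 1) * |a k| ^ (s - 1) / N ^ (s - 1)|
          = |a k| ^ (s - 1) / N ^ (s - 1) := by
        intro k
        rw [abs_div, abs_mul]
        congr 1
        · rw [abs_of_nonneg (Real.rpow_nonneg (abs_nonneg _) _)]
          split <;> simp
        · exact abs_of_pos (Real.rpow_pos_of_pos hN _)
      have hterm : ∀ k, |(if a k < 0 then (-1:ℝ) else 1) * |a k| ^ (s - 1) / N ^ (s - 1)| ^ p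
          = |a k| ^ s / N ^ s := by
        intro k
        rw [habs k, Real.div_rpow (Real.rpow_nonneg (abs_nonneg _) _)
          (Real.rpow_pos_of_pos hN _).le, ← Real.rpow_mul (abs_nonneg _),
          ← Real.rpow_mul hN.le, hsp]
      apply le_of_eq
      calc (∑ i, |(if a i < 0 then (-1:ℝ) else 1) * |a i| ^ (s - 1) / N ^ (s - 1)| ^ p) ^ (1/p)
          = (∑ i, |a i| ^ s / N ^ s) ^ (1/p) := by
            congr 1
            exact Finset.sum_congr rfl fun k _ => hterm k
        _ = 1 := by
            rw [← Finset.sum_div, ← hNs, div_self (Real.rpow_pos_of_pos hN s).ne',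
              Real.one_rpow]
    · have hterm2 : ∀ k, (if a k < 0 then (-1:ℝ) else 1) * |a k| ^ (s - 1) / N ^ (s - 1) * a k
          = |a k| ^ s / N ^ (s - 1) := by
        intro k
        have h1 : (if a k < 0 then (-1:ℝ) else 1) * a k = |a k| := by
          split <;> rename_i h
          · rw [abs_of_neg h]; ring
          · rw [abs_of_nonneg (not_lt.mp h)]; ring
        have h2 : |a k| ^ (s - 1) * |a k| = |a k| ^ s := by
          rcases eq_or_ne (a k) 0 with h | h
          · simp [h, Real.zero_rpow hs0.ne', Real.zero_rpow (by linarith : s - 1 ≠ 0)]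
          · rw [← Real.rpow_add_one (abs_ne_zero.mpr h)]
            norm_num
        have h3 : (if a k < 0 then (-1:ℝ) else 1) * |a k| ^ (s - 1) / N ^ (s - 1) * a k
            = ((if a k < 0 then (-1:ℝ) else 1) * a k) * |a k| ^ (s - 1) / N ^ (s - 1) := by
          ring
        rw [h3, h1, mul_comm (|a k|) (|a k| ^ (s - 1)), h2]
      apply le_of_eq
      calc N = N ^ s / N ^ (s - 1) := by
            rw [← Real.rpow_sub hN]; norm_num
        _ = (∑ k, |a k| ^ s) / N ^ (s - 1) := by rw [hNs]
        _ = ∑ k, (if a k < 0 then (-1:ℝ) else 1) * |a k| ^ (s - 1) / N ^ (s - 1) * a k := by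
            rw [Finset.sum_div]
            exact (Finset.sum_congr rfl fun k _ => hterm2 k).symm
        _ = ∑ k, (fun k => (if a k < 0 then (-1:ℝ) else 1) * |a k| ^ (s - 1) / N ^ (s - 1)) k
              * a k := rfl

theorem lq_distance_to_halfspace_eq {n : ℕ} (q qs : ENNReal)
    [Fact (1 ≤ q)] [Fact (1 ≤ qs)] (hconj : 1 / q + 1 / qs = 1)
    (z wi wj : Fin n → ℝ) (hne : wi ≠ wj) :
    IsLeast {r : ℝ | ∃ x : Fin n → ℝ, lpnorm 2 (x - wi) ≥ lpnorm 2 (x - wj) ∧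
        r = lpnorm q (x - z)}
      (max 0 ((lpnorm 2 (z - wj) ^ 2 - lpnorm 2 (z - wi) ^ 2) /
        (2 * lpnorm qs (wj - wi)))) := by
  set a : Fin n → ℝ := wj - wi with ha_def
  have ha : a ≠ 0 := sub_ne_zero.mpr (Ne.symm hne)
  have hNa : 0 < lpnorm qs a := lpnorm_pos qs ha
  set c : ℝ := (lpnorm 2 (z - wj) ^ 2 - lpnorm 2 (z - wi) ^ 2) / 2 with hc_def
  have hM : (lpnorm 2 (z - wj) ^ 2 - lpnorm 2 (z - wi) ^ 2) / (2 * lpnorm qs a)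
      = c / lpnorm qs a := by
    rw [hc_def, div_div]
  rw [hM]
  have hc2 : c = ((∑ k, (z - wj) k ^ 2) - ∑ k, (z - wi) k ^ 2) / 2 := by
    rw [hc_def, lpnorm_two_sq, lpnorm_two_sq]
  have hconstr : ∀ x : Fin n → ℝ,
      (lpnorm 2 (x - wi) ≥ lpnorm 2 (x - wj)) ↔ c ≤ ∑ k, (x - z) k * a k := by
    intro x
    have key : (∑ k, (x - wi) k ^ 2) - ∑ k, (x - wj) k ^ 2
        = 2 * (∑ k, (x - z) k * a k) - ((∑ k, (z - wj) k ^ 2) - ∑ k, (z - wi) k ^ 2) := by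
      have hk : ∀ k : Fin n, (x - wi) k ^ 2 - (x - wj) k ^ 2
          = 2 * ((x - z) k * a k) - ((z - wj) k ^ 2 - (z - wi) k ^ 2) := by
        intro k
        simp only [ha_def, Pi.sub_apply]
        ring
      calc (∑ k, (x - wi) k ^ 2) - ∑ k, (x - wj) k ^ 2
          = ∑ k, ((x - wi) k ^ 2 - (x - wj) k ^ 2) := (Finset.sum_sub_distrib _ _).symm
        _ = ∑ k, (2 * ((x - z) k * a k) - ((z - wj) k ^ 2 - (z - wi) k ^ 2)) :=
            Finset.sum_congr rfl fun k _ => hk k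
        _ = 2 * (∑ k, (x - z) k * a k) - ((∑ k, (z - wj) k ^ 2) - ∑ k, (z - wi) k ^ 2) := by
            rw [Finset.sum_sub_distrib, ← Finset.mul_sum, Finset.sum_sub_distrib]
    rw [ge_iff_le, ← pow_le_pow_iff_left₀ (lpnorm_nonneg _ _) (lpnorm_nonneg _ _)
      (two_ne_zero), lpnorm_two_sq, lpnorm_two_sq]
    constructor
    · intro h; rw [hc2]; linarith
    · intro h; rw [hc2] at h; linarith
  have hlb : ∀ x : Fin n → ℝ, c ≤ ∑ k, (x - z) k * a k →
      max 0 (c / lpnorm qs a) ≤ lpnorm q (x - z) := by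
    intro x hx
    refine max_le (lpnorm_nonneg _ _) ?_
    rw [div_le_iff₀ hNa]
    exact hx.trans (lpnorm_holder q qs hconj (x - z) a)
  constructor
  · rcases le_or_gt c 0 with hc0 | hc0
    · have hle : c / lpnorm qs a ≤ 0 := div_nonpos_of_nonpos_of_nonneg hc0 hNa.le
      refine ⟨z, (hconstr z).mpr ?_, ?_⟩
      · simpa using hc0
      · rw [sub_self, lpnorm_zero, max_eq_left hle]
    · obtain ⟨u, hu1, hu2⟩ := exists_dual_vec q qs hconj a ha
      set t := c / lpnorm qs a with ht_def
      have ht0 : 0 < t := div_pos hc0 hNa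
      have hfeas : c ≤ ∑ k, ((z + t • u) - z) k * a k := by
        rw [add_sub_cancel_left]
        have hsum : ∑ k, (t • u) k * a k = t * ∑ k, u k * a k := by
          simp only [Pi.smul_apply, smul_eq_mul, Finset.mul_sum, mul_assoc]
        rw [hsum, ht_def, div_mul_eq_mul_div, le_div_iff₀ hNa]
        exact mul_le_mul_of_nonneg_left hu2 hc0.le
      refine ⟨z + t • u, (hconstr _).mpr hfeas, ?_⟩
      have hxz : z + t • u - z = t • u := add_sub_cancel_left z (t • u)
      have hle2 : lpnorm q (z + t • u - z) ≤ t := by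
        rw [hxz, lpnorm_smul, abs_of_pos ht0]
        calc t * lpnorm q u ≤ t * 1 := mul_le_mul_of_nonneg_left hu1 ht0.le
          _ = t := mul_one t
      have hge2 : max 0 (c / lpnorm qs a) ≤ lpnorm q (z + t • u - z) := hlb _ hfeas
      exact le_antisymm hge2 (by rw [max_eq_right ht0.le]; exact hle2)
  · rintro r ⟨x, hx, rfl⟩
    exact hlb x ((hconstr x).mp hx)
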